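/- arXiv:2511.17617 — 4 statements merged into one kernel-verified Lean document; each statement's English description precedes it below -/
import Mathlib

section
/- Soundness of the until unitary construction: let s : ℝ → Prop be a signal, let φ₁ hold exactly on the interval I₁ = [m₁,n₁) and φ₂ hold exactly on I₂ = [m₂,n₂), and let 0 ≤ a ≤ b. Then for every t ∈ ((I₁ ∩ I₂) ⊖ [a,b]) ∩ I₁, there exists t' ∈ [t+a, t+b] with t' ∈ I₂ and for all t'' ∈ [t, t'], t'' ∈ I₁. -/
/-- Soundness of the until unitary construction: every time point in
`((I₁ ∩ I₂) ⊖ [a,b]) ∩ I₁` satisfies the until semantics, where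
`I₁ = [m₁,n₁)`, `I₂ = [m₂,n₂)` are the exact satisfaction intervals. -/
theorem until_unitary_sound (m₁ n₁ m₂ n₂ a b : ℝ)
    (h₁ : m₁ < n₁) (h₂ : m₂ < n₂)
    (hne : max m₁ m₂ < min n₁ n₂)
    (h0a : 0 ≤ a) (hab : a ≤ b) :
    ∀ t ∈ (Set.Ico (max m₁ m₂ - b) (min n₁ n₂ - a) ∩ Set.Ici (0 : ℝ))
        ∩ Set.Ico m₁ n₁,
      ∃ t' ∈ Set.Icc (t + a) (t + b),
        t' ∈ Set.Ico m₂ n₂ ∧ ∀ t'' ∈ Set.Icc t t', t'' ∈ Set.Ico m₁ n₁ := by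
  rintro t ⟨⟨⟨htl, htr⟩, ht0⟩, htm₁, htn₁⟩
  refine ⟨max (t + a) (max m₁ m₂), ⟨le_max_left _ _, max_le (by linarith) (by linarith)⟩,
    ⟨le_trans (le_max_right m₁ m₂) (le_max_right _ _), ?_⟩, ?_⟩
  · have h1 : t + a < min n₁ n₂ := by linarith
    exact max_lt (lt_of_lt_of_le h1 (min_le_right _ _)) (lt_of_lt_of_le hne (min_le_right _ _))
  · rintro t'' ⟨h1, h2⟩
    refine ⟨le_trans htm₁ h1, ?_⟩
    have h3 : t + a < min n₁ n₂ := by linarith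
    have := max_lt (lt_of_lt_of_le h3 (min_le_left _ _)) (lt_of_lt_of_le hne (min_le_left _ _))
    linarith [le_trans h2 this.le]
end

section
/- Completeness of the until unitary construction for unitary signals: with φ₁ true exactly on I₁ = [m₁,n₁) and φ₂ true exactly on I₂ = [m₂,n₂), and 0 ≤ a ≤ b, if t ∈ [0,∞), t ∈ I₁, and there exists t' ∈ [t+a,t+b] with t' ∈ I₂ and [t,t'] ⊆ I₁, then t ∈ ((I₁ ∩ I₂) ⊖ [a,b]) ∩ I₁. -/
/-- Completeness of the until unitary construction: if the until semantics
holds at `t ∈ I₁`, then `t ∈ ((I₁ ∩ I₂) ⊖ [a,b]) ∩ I₁`. -/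
theorem until_unitary_complete (m₁ n₁ m₂ n₂ a b t : ℝ)
    (h₁ : m₁ < n₁) (h₂ : m₂ < n₂)
    (h0a : 0 ≤ a) (hab : a ≤ b) (ht : 0 ≤ t)
    (htI₁ : t ∈ Set.Ico m₁ n₁)
    (hsem : ∃ t' ∈ Set.Icc (t + a) (t + b),
      t' ∈ Set.Ico m₂ n₂ ∧ Set.Icc t t' ⊆ Set.Ico m₁ n₁) :
    t ∈ (Set.Ico (max m₁ m₂ - b) (min n₁ n₂ - a) ∩ Set.Ici (0 : ℝ))
        ∩ Set.Ico m₁ n₁ := by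
  obtain ⟨t', ⟨h1, h2⟩, ⟨h3, h4⟩, hsub⟩ := hsem
  have htt' : t ≤ t' := by linarith
  have ht'n₁ : t' < n₁ := (hsub ⟨htt', le_refl t'⟩).2
  refine ⟨⟨⟨?_, ?_⟩, ht⟩, htI₁⟩
  · rw [sub_le_iff_le_add, max_le_iff]
    exact ⟨by linarith [htI₁.1], by linarith⟩
  · rw [lt_sub_iff_add_lt, lt_min_iff]
    exact ⟨by linarith, by linarith⟩
end

section
/- Monotonicity of the interval until semantics: let S₁, S₂, S₁', S₂' : ℝ → Set Bool be satisfaction signals with S₁'(t) ⊆ S₁(t) and S₂'(t) ⊆ S₂(t) nonempty for all t (refinement). Define Until(S₁,S₂)(t) = {1} if ∃ t' ∈ [t+a,t+b] with S₂(t') = {1} and ∀ t'' ∈ [t,t'], S₁(t'') = {1}; = {0} if ∀ t' ∈ [t+a,t+b], S₂(t') = {0} or ∃ t'' ∈ [t,t'], S₁(t'') = {0}; = {0,1} otherwise. Then Until(S₁',S₂')(t) ⊆ Until(S₁,S₂)(t) for all t, i.e., refining inputs can only refine the until output (definite values are preserved). -/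
open scoped Classical

/-- The three-valued interval until semantics. -/
noncomputable def untilItv (a b : ℝ) (S₁ S₂ : ℝ → Set Bool) : ℝ → Set Bool :=
  fun t =>
    if ∃ t' ∈ Set.Icc (t + a) (t + b),
        S₂ t' = ({true} : Set Bool) ∧
        ∀ t'' ∈ Set.Icc t t', S₁ t'' = ({true} : Set Bool) then {true}
    else if ∀ t' ∈ Set.Icc (t + a) (t + b),
        S₂ t' = ({false} : Set Bool) ∨
        ∃ t'' ∈ Set.Icc t t', S₁ t'' = ({false} : Set Bool) then {false}
    else {false, true}

lemma refine_singleton {S S' : Set Bool} (hsub : S' ⊆ S) (hne : S'.Nonempty)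
    (x : Bool) (h : S = {x}) : S' = {x} := by
  subst h
  exact (hne.subset_singleton_iff).mp hsub

/-- Monotonicity of the interval until semantics: refining the inputs can only
refine the until output. -/
theorem untilItv_monotone (a b : ℝ) (h0a : 0 ≤ a) (hab : a ≤ b)
    (S₁ S₂ S₁' S₂' : ℝ → Set Bool)
    (h₁ : ∀ t, S₁' t ⊆ S₁ t) (h₂ : ∀ t, S₂' t ⊆ S₂ t)
    (h₁ne : ∀ t, (S₁' t).Nonempty) (h₂ne : ∀ t, (S₂' t).Nonempty) :
    ∀ t, untilItv a b S₁' S₂' t ⊆ untilItv a b S₁ S₂ t := by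
  intro t
  unfold untilItv
  by_cases hT : ∃ t' ∈ Set.Icc (t + a) (t + b),
      S₂ t' = ({true} : Set Bool) ∧
      ∀ t'' ∈ Set.Icc t t', S₁ t'' = ({true} : Set Bool)
  · obtain ⟨t', ht', h2, h1⟩ := hT
    have hT' : ∃ t' ∈ Set.Icc (t + a) (t + b),
        S₂' t' = ({true} : Set Bool) ∧
        ∀ t'' ∈ Set.Icc t t', S₁' t'' = ({true} : Set Bool) :=
      ⟨t', ht', refine_singleton (h₂ t') (h₂ne t') true h2,
        fun t'' ht'' => refine_singleton (h₁ t'') (h₁ne t'') true (h1 t'' ht'')⟩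
    rw [if_pos hT', if_pos ⟨t', ht', h2, h1⟩]
  · rw [if_neg hT]
    by_cases hF : ∀ t' ∈ Set.Icc (t + a) (t + b),
        S₂ t' = ({false} : Set Bool) ∨
        ∃ t'' ∈ Set.Icc t t', S₁ t'' = ({false} : Set Bool)
    · have hF' : ∀ t' ∈ Set.Icc (t + a) (t + b),
          S₂' t' = ({false} : Set Bool) ∨
          ∃ t'' ∈ Set.Icc t t', S₁' t'' = ({false} : Set Bool) := by
        intro t' ht'
        rcases hF t' ht' with h | ⟨t'', ht'', h⟩
        · exact Or.inl (refine_singleton (h₂ t') (h₂ne t') false h)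
        · exact Or.inr ⟨t'', ht'', refine_singleton (h₁ t'') (h₁ne t'') false h⟩
      rw [if_pos hF]
      have hnT' : ¬ ∃ t' ∈ Set.Icc (t + a) (t + b),
          S₂' t' = ({true} : Set Bool) ∧
          ∀ t'' ∈ Set.Icc t t', S₁' t'' = ({true} : Set Bool) := by
        rintro ⟨t', ht', h2, h1⟩
        rcases hF' t' ht' with h | ⟨t'', ht'', h⟩
        · rw [h2] at h; simp [Set.ext_iff] at h
        · rw [h1 t'' ht''] at h; simp [Set.ext_iff] at h
      rw [if_neg hnT', if_pos hF']
    · rw [if_neg hF]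
      intro x _
      cases x <;> simp
end

section
/- Soundness of interval satisfaction for the until operator: suppose S₁, S₂ : ℝ → Set Bool enclose Boolean signals b₁, b₂ : ℝ → Bool. Define bU(t) = true iff ∃ t' ∈ [t+a,t+b], b₂(t') = true and ∀ t'' ∈ [t,t'], b₁(t'') = true. Define the interval until SU(t) = {1} if ∃ t' ∈ [t+a,t+b], S₂(t') = {1} and ∀ t'' ∈ [t,t'], S₁(t'') = {1}; SU(t) = {0} if ∀ t' ∈ [t+a,t+b], (S₂(t') = {0} or ∃ t'' ∈ [t,t'], S₁(t'') = {0}); and SU(t) = {0,1} otherwise. Then bU(t) ∈ SU(t) for all t. -/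
open scoped Classical

/-- Classical until on Boolean signals. -/
noncomputable def boolUntil (a b : ℝ) (b₁ b₂ : ℝ → Bool) : ℝ → Bool :=
  fun t =>
    if ∃ t' ∈ Set.Icc (t + a) (t + b),
        b₂ t' = true ∧ ∀ t'' ∈ Set.Icc t t', b₁ t'' = true then true
    else false

/-- Three-valued interval until semantics over satisfaction signals. -/
noncomputable def itvUntil (a b : ℝ) (S₁ S₂ : ℝ → Set Bool) : ℝ → Set Bool :=
  fun t =>
    if ∃ t' ∈ Set.Icc (t + a) (t + b),
        S₂ t' = ({true} : Set Bool) ∧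
        ∀ t'' ∈ Set.Icc t t', S₁ t'' = ({true} : Set Bool) then {true}
    else if ∀ t' ∈ Set.Icc (t + a) (t + b),
        S₂ t' = ({false} : Set Bool) ∨
        ∃ t'' ∈ Set.Icc t t', S₁ t'' = ({false} : Set Bool) then {false}
    else {false, true}

/-- Soundness of the guaranteed interval until semantics w.r.t. classical
STL until: the Boolean until value is enclosed by the interval until. -/
theorem itvUntil_sound (a b : ℝ) (h0a : 0 ≤ a) (hab : a ≤ b)
    (S₁ S₂ : ℝ → Set Bool) (b₁ b₂ : ℝ → Bool)
    (h₁ : ∀ t, b₁ t ∈ S₁ t) (h₂ : ∀ t, b₂ t ∈ S₂ t) :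
    ∀ t, boolUntil a b b₁ b₂ t ∈ itvUntil a b S₁ S₂ t := by
  intro t
  unfold boolUntil itvUntil
  by_cases hPos : ∃ t' ∈ Set.Icc (t + a) (t + b),
      S₂ t' = ({true} : Set Bool) ∧
      ∀ t'' ∈ Set.Icc t t', S₁ t'' = ({true} : Set Bool)
  · have hPos' := hPos
    obtain ⟨t', ht', hS₂, hS₁⟩ := hPos
    have hb : ∃ t' ∈ Set.Icc (t + a) (t + b),
        b₂ t' = true ∧ ∀ t'' ∈ Set.Icc t t', b₁ t'' = true := by
      refine ⟨t', ht', ?_, fun t'' ht'' => ?_⟩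
      · have := h₂ t'; rw [hS₂] at this; simpa using this
      · have := h₁ t''; rw [hS₁ t'' ht''] at this; simpa using this
    rw [if_pos hb, if_pos hPos']
    exact rfl
  · rw [if_neg hPos]
    by_cases hNeg : ∀ t' ∈ Set.Icc (t + a) (t + b),
        S₂ t' = ({false} : Set Bool) ∨
        ∃ t'' ∈ Set.Icc t t', S₁ t'' = ({false} : Set Bool)
    · have hb : ¬ ∃ t' ∈ Set.Icc (t + a) (t + b),
          b₂ t' = true ∧ ∀ t'' ∈ Set.Icc t t', b₁ t'' = true := by
        rintro ⟨t', ht', hb₂, hb₁⟩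
        rcases hNeg t' ht' with h | ⟨t'', ht'', hS₁⟩
        · have := h₂ t'; rw [h] at this; simp at this; simp [this] at hb₂
        · have h3 := h₁ t''; rw [hS₁] at h3; simp at h3
          have := hb₁ t'' ht''; rw [this] at h3; exact Bool.noConfusion h3
      rw [if_neg hb, if_pos hNeg]; exact rfl
    · rw [if_neg hNeg]
      split_ifs <;> simp
end
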